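/- The free bosons satisfy the oscillator (Heisenberg) commutation relations on F: for all m, n ∈ ℤ, [α_m, α_n] = m δ_{m,−n}·id_F. In particular, the map s_n ↦ α_n, K ↦ id defines a representation of the oscillator algebra on F (Proposition 14.9 of Kac, first part). -/

import Mathlib

open Finsupp

/-- A semi-infinite monomial: a strictly decreasing sequence `seq : ℕ → ℤ` such that
for some `m : ℤ` (its charge) one has `seq k = m - k` for all sufficiently large `k`. -/
structure SIM : Type where
  seq : ℕ → ℤ
  anti : StrictAnti seq
  ex_charge : ∃ m : ℤ, ∃ N : ℕ, ∀ k, N ≤ k → seq k = m - (k : ℤ)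

/-- Full fermionic Fock space: the free `ℂ`-vector space on the set of all
semi-infinite monomials. -/
abbrev FockF : Type := SIM →₀ ℂ

namespace SIM

/-- `φ` is a semi-infinite monomial of charge `m`. -/
def HasCharge (φ : SIM) (m : ℤ) : Prop := ∃ N : ℕ, ∀ k, N ≤ k → φ.seq k = m - (k : ℤ)

theorem exists_lt (φ : SIM) (j : ℤ) : ∃ n : ℕ, φ.seq n < j := by
  obtain ⟨m, N, hN⟩ := φ.ex_charge
  refine ⟨N + (m - j).toNat + 1, ?_⟩
  have h1 := hN (N + (m - j).toNat + 1) (by omega)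
  omega

/-- The position at which `j` is inserted into `φ`: the least `n` with `φ.seq n < j`.
If `i_s > j > i_{s+1}` this equals `s + 1`, and it equals `0` if `j > i_0`. -/
noncomputable def wedgePos (φ : SIM) (j : ℤ) : ℕ := Nat.find (φ.exists_lt j)

/-- The semi-infinite monomial obtained from `φ` by inserting `j` (assuming `j` does not
occur in `φ`). -/
noncomputable def insertSIM (φ : SIM) (j : ℤ) (hj : ∀ s, φ.seq s ≠ j) : SIM where
  seq k := if k < φ.wedgePos j then φ.seq k else if k = φ.wedgePos j then j else φ.seq (k - 1)
  anti := by
    have hs : φ.seq (φ.wedgePos j) < j := Nat.find_spec (φ.exists_lt j)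
    have hm : ∀ k, k < φ.wedgePos j → j < φ.seq k := by
      intro k hk
      have h1 := Nat.find_min (φ.exists_lt j) hk
      have h2 := hj k
      omega
    have ha : ∀ a b : ℕ, a < b → φ.seq b < φ.seq a := fun a b h => φ.anti h
    apply strictAnti_nat_of_succ_lt
    intro k
    try dsimp only
    rcases lt_trichotomy k (φ.wedgePos j) with hk | hk | hk
    · rcases Nat.lt_or_ge (k + 1) (φ.wedgePos j) with hk1 | hk1
      · rw [if_pos hk, if_pos hk1]
        exact ha k (k + 1) (by omega)
      · have hk1' : k + 1 = φ.wedgePos j := by omega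
        rw [if_pos hk, if_neg (by omega), if_pos hk1']
        exact hm k hk
    · rw [if_neg (by omega), if_neg (by omega), if_neg (by omega), if_pos hk,
        (by omega : k + 1 - 1 = k), hk]
      exact hs
    · rw [if_neg (by omega), if_neg (by omega), if_neg (by omega), if_neg (by omega),
        (by omega : k + 1 - 1 = k)]
      exact ha (k - 1) k (by omega)
  ex_charge := by
    obtain ⟨m, N, hN⟩ := φ.ex_charge
    refine ⟨m + 1, N + φ.wedgePos j + 1, fun k hk => ?_⟩
    try dsimp only
    rw [if_neg (by omega), if_neg (by omega)]
    have h3 := hN (k - 1) (by omega)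
    omega

/-- The semi-infinite monomial obtained from `φ` by deleting the entry in position `s`. -/
noncomputable def removeSIM (φ : SIM) (s : ℕ) : SIM where
  seq k := if k < s then φ.seq k else φ.seq (k + 1)
  anti := by
    apply strictAnti_nat_of_succ_lt
    intro k
    try dsimp only
    split_ifs <;> exact φ.anti (by omega)
  ex_charge := by
    obtain ⟨m, N, hN⟩ := φ.ex_charge
    refine ⟨m - 1, N + s, fun k hk => ?_⟩
    try dsimp only
    rw [if_neg (by omega)]
    have h3 := hN (k + 1) (by omega)
    omega

end SIM

open Classical in
/-- The wedging operator `ψ_j` on full fermionic Fock space.  On a basis element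
`φ = (i_0, i_1, ...)` it is `0` if `j = i_s` for some `s`, and otherwise it is
`(-1)^n` times the basis element obtained by inserting `j` in position `n`
(so `(-1)^{s+1}` when `i_s > j > i_{s+1}`, and `+1` when `j > i_0`). -/
noncomputable def psi (j : ℤ) : FockF →ₗ[ℂ] FockF :=
  Finsupp.lift FockF ℂ SIM fun φ =>
    if hj : ∀ s, φ.seq s ≠ j then
      ((-1 : ℂ) ^ (φ.wedgePos j)) • Finsupp.single (φ.insertSIM j hj) 1
    else 0

open Classical in
/-- The contracting operator `ψ_j^*` on full fermionic Fock space.  On a basis element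
`φ = (i_0, i_1, ...)` it is `0` if `j ≠ i_s` for all `s`, and `(-1)^s` times the basis
element obtained by deleting `i_s` if `j = i_s`. -/
noncomputable def psiStar (j : ℤ) : FockF →ₗ[ℂ] FockF :=
  Finsupp.lift FockF ℂ SIM fun φ =>
    if hj : ∃ s, φ.seq s = j then
      ((-1 : ℂ) ^ hj.choose) • Finsupp.single (φ.removeSIM hj.choose) 1
    else 0

open Classical in
/-- The free bosons `α_n` on full fermionic Fock space, defined on each basis vector `φ` by
`α_n φ = Σ_{j ∈ ℤ} ψ_j ψ_{j+n}^*(φ)` for `n ≠ 0` and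
`α_0 φ = Σ_{j > 0} ψ_j ψ_j^*(φ) − Σ_{j ≤ 0} ψ_j^* ψ_j(φ)` (all sums are finite). -/
noncomputable def alpha (n : ℤ) : FockF →ₗ[ℂ] FockF :=
  Finsupp.lift FockF ℂ SIM fun φ =>
    if n = 0 then
      (∑ᶠ (j : ℤ) (_ : 0 < j), psi j (psiStar j (Finsupp.single φ 1))) -
        ∑ᶠ (j : ℤ) (_ : j ≤ 0), psiStar j (psi j (Finsupp.single φ 1))
    else ∑ᶠ j : ℤ, psi j (psiStar (j + n) (Finsupp.single φ 1))

namespace SIM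

theorem ext' {φ ψ : SIM} (h : φ.seq = ψ.seq) : φ = ψ := by
  cases φ; cases ψ; simpa using h

theorem seq_inj (φ : SIM) {s t : ℕ} (h : φ.seq s = φ.seq t) : s = t :=
  φ.anti.injective h

theorem seq_le_seq0 (φ : SIM) (s : ℕ) : φ.seq s ≤ φ.seq 0 :=
  φ.anti.antitone (Nat.zero_le s)

theorem hasCharge_unique {φ : SIM} {m m' : ℤ} (h : φ.HasCharge m) (h' : φ.HasCharge m') :
    m = m' := by
  obtain ⟨N, hN⟩ := h; obtain ⟨N', hN'⟩ := h'
  have h1 := hN (max N N') (le_max_left _ _)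
  have h2 := hN' (max N N') (le_max_right _ _)
  omega

noncomputable def charge (φ : SIM) : ℤ := φ.ex_charge.choose

theorem hasCharge_charge (φ : SIM) : φ.HasCharge φ.charge := φ.ex_charge.choose_spec

theorem mem_of_le {φ : SIM} {m : ℤ} {N : ℕ} (h : ∀ k, N ≤ k → φ.seq k = m - (k : ℤ))
    {j : ℤ} (hj : j ≤ m - N) : ∃ s, φ.seq s = j := by
  refine ⟨(m - j).toNat, ?_⟩
  have := h (m - j).toNat (by omega)
  omega

theorem not_mem_of_gt {φ : SIM} {j : ℤ} (hj : φ.seq 0 < j) : ∀ s, φ.seq s ≠ j := by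
  intro s hs
  have := φ.seq_le_seq0 s
  omega

theorem wedgePos_spec (φ : SIM) (j : ℤ) : φ.seq (φ.wedgePos j) < j :=
  Nat.find_spec (φ.exists_lt j)

theorem lt_of_lt_wedgePos {φ : SIM} {j : ℤ} (hj : ∀ s, φ.seq s ≠ j) {t : ℕ}
    (ht : t < φ.wedgePos j) : j < φ.seq t := by
  have h1 := Nat.find_min (φ.exists_lt j) ht
  have h2 := hj t
  omega

theorem wedgePos_eq {φ : SIM} {j : ℤ} {p : ℕ} (h1 : φ.seq p < j)
    (h2 : ∀ t, t < p → j < φ.seq t) : φ.wedgePos j = p := by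
  rw [SIM.wedgePos, Nat.find_eq_iff]
  exact ⟨h1, fun t ht => by have := h2 t ht; omega⟩

theorem insertSIM_seq (φ : SIM) (j : ℤ) (hj : ∀ s, φ.seq s ≠ j) (k : ℕ) :
    (φ.insertSIM j hj).seq k =
      if k < φ.wedgePos j then φ.seq k else if k = φ.wedgePos j then j
      else φ.seq (k - 1) := rfl

theorem removeSIM_seq (φ : SIM) (s k : ℕ) :
    (φ.removeSIM s).seq k = if k < s then φ.seq k else φ.seq (k + 1) := rfl

theorem mem_insertSIM {φ : SIM} {j : ℤ} {hj : ∀ s, φ.seq s ≠ j} {a : ℤ} :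
    (∃ s, (φ.insertSIM j hj).seq s = a) ↔ a = j ∨ ∃ s, φ.seq s = a := by
  constructor
  · rintro ⟨s, hs⟩
    rw [insertSIM_seq] at hs
    split_ifs at hs with h1 h2
    · exact Or.inr ⟨s, hs⟩
    · exact Or.inl hs.symm
    · exact Or.inr ⟨s - 1, hs⟩
  · rintro (rfl | ⟨s, hs⟩)
    · exact ⟨φ.wedgePos a, by rw [insertSIM_seq]; simp⟩
    · rcases Nat.lt_or_ge s (φ.wedgePos j) with h | h
      · exact ⟨s, by rw [insertSIM_seq, if_pos h]; exact hs⟩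
      · refine ⟨s + 1, ?_⟩
        rw [insertSIM_seq, if_neg (by omega), if_neg (by omega)]
        simpa using hs

theorem mem_removeSIM {φ : SIM} {s : ℕ} {a : ℤ} :
    (∃ t, (φ.removeSIM s).seq t = a) ↔ (∃ t, φ.seq t = a) ∧ a ≠ φ.seq s := by
  constructor
  · rintro ⟨t, ht⟩
    rw [removeSIM_seq] at ht
    split_ifs at ht with h1
    · refine ⟨⟨t, ht⟩, fun hc => ?_⟩
      have := φ.seq_inj (ht.trans hc)
      omega
    · refine ⟨⟨t + 1, ht⟩, fun hc => ?_⟩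
      have := φ.seq_inj (ht.trans hc)
      omega
  · rintro ⟨⟨t, ht⟩, hne⟩
    have hts : t ≠ s := by rintro rfl; exact hne ht.symm
    rcases Nat.lt_or_ge t s with h | h
    · exact ⟨t, by rw [removeSIM_seq, if_pos h]; exact ht⟩
    · have hts' : s < t := by omega
      refine ⟨t - 1, ?_⟩
      rw [removeSIM_seq, if_neg (by omega)]
      rw [(by omega : t - 1 + 1 = t)]
      exact ht

end SIM

theorem lift_single (f : SIM → FockF) (φ : SIM) :
    Finsupp.lift FockF ℂ SIM f (Finsupp.single φ 1) = f φ := by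
  rw [Finsupp.lift_apply, Finsupp.sum_single_index (by simp)]
  simp

theorem psi_single_of_mem {φ : SIM} {j : ℤ} {s : ℕ} (h : φ.seq s = j) :
    psi j (Finsupp.single φ 1) = 0 := by
  rw [psi, lift_single, dif_neg]
  push_neg
  exact ⟨s, h⟩

theorem psi_single {φ : SIM} {j : ℤ} (hj : ∀ s, φ.seq s ≠ j) :
    psi j (Finsupp.single φ 1)
      = ((-1 : ℂ) ^ (φ.wedgePos j)) • Finsupp.single (φ.insertSIM j hj) 1 := by
  rw [psi, lift_single, dif_pos hj]

theorem psiStar_single_of_not_mem {φ : SIM} {j : ℤ} (h : ∀ s, φ.seq s ≠ j) :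
    psiStar j (Finsupp.single φ 1) = 0 := by
  rw [psiStar, lift_single, dif_neg]
  rintro ⟨s, hs⟩
  exact h s hs

theorem psiStar_single {φ : SIM} {j : ℤ} {s : ℕ} (h : φ.seq s = j) :
    psiStar j (Finsupp.single φ 1)
      = ((-1 : ℂ) ^ s) • Finsupp.single (φ.removeSIM s) 1 := by
  have hj : ∃ t, φ.seq t = j := ⟨s, h⟩
  have hc : hj.choose = s := φ.seq_inj (hj.choose_spec.trans h.symm)
  rw [psiStar, lift_single, dif_pos hj, hc]
theorem fock_ext {f g : FockF →ₗ[ℂ] FockF}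
    (h : ∀ φ, f (Finsupp.single φ 1) = g (Finsupp.single φ 1)) : f = g := by
  apply Finsupp.lhom_ext
  intro a b
  have hb : (Finsupp.single a b : FockF) = b • Finsupp.single a 1 := by
    rw [Finsupp.smul_single, smul_eq_mul, mul_one]
  rw [hb, map_smul, map_smul, h]

namespace SIM

theorem insertSIM_seq_wedgePos (φ : SIM) (j : ℤ) (hj : ∀ s, φ.seq s ≠ j) :
    (φ.insertSIM j hj).seq (φ.wedgePos j) = j := by
  rw [insertSIM_seq, if_neg (by omega), if_pos rfl]

theorem not_mem_removeSIM {φ : SIM} {s : ℕ} {a : ℤ} (h : φ.seq s = a) :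
    ∀ t, (φ.removeSIM s).seq t ≠ a := by
  intro t ht
  rw [removeSIM_seq] at ht
  split_ifs at ht with h1
  · have := φ.seq_inj (ht.trans h.symm); omega
  · have := φ.seq_inj (ht.trans h.symm); omega

theorem wedgePos_removeSIM {φ : SIM} {s : ℕ} {a : ℤ} (h : φ.seq s = a) :
    (φ.removeSIM s).wedgePos a = s := by
  apply wedgePos_eq
  · rw [removeSIM_seq, if_neg (by omega)]
    have := φ.anti (show s < s + 1 by omega); omega
  · intro t ht
    rw [removeSIM_seq, if_pos ht]
    have := φ.anti ht; omega

theorem insert_removeSIM {φ : SIM} {s : ℕ} {a : ℤ} (h : φ.seq s = a)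
    (hn : ∀ t, (φ.removeSIM s).seq t ≠ a) :
    (φ.removeSIM s).insertSIM a hn = φ := by
  apply ext'; funext t
  rw [insertSIM_seq, wedgePos_removeSIM h]
  split_ifs with h1 h2
  · rw [removeSIM_seq, if_pos h1]
  · rw [h2]; exact h.symm
  · rw [removeSIM_seq, if_neg (by omega)]
    congr 1; omega

theorem remove_insertSIM {φ : SIM} {j : ℤ} (hj : ∀ s, φ.seq s ≠ j) :
    (φ.insertSIM j hj).removeSIM (φ.wedgePos j) = φ := by
  apply ext'; funext t
  rw [removeSIM_seq]
  split_ifs with h1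
  · rw [insertSIM_seq, if_pos h1]
  · rw [insertSIM_seq, if_neg (by omega), if_neg (by omega)]
    congr 1

end SIM

theorem psi_psi_self (j : ℤ) : psi j ∘ₗ psi j = 0 := by
  apply fock_ext
  intro φ
  rw [LinearMap.comp_apply, LinearMap.zero_apply]
  by_cases hm : ∃ s, φ.seq s = j
  · obtain ⟨s, hs⟩ := hm
    rw [psi_single_of_mem hs, map_zero]
  · push_neg at hm
    rw [psi_single hm, map_smul,
      psi_single_of_mem (SIM.insertSIM_seq_wedgePos φ j hm), smul_zero]

theorem psiStar_psiStar_self (j : ℤ) : psiStar j ∘ₗ psiStar j = 0 := by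
  apply fock_ext
  intro φ
  rw [LinearMap.comp_apply, LinearMap.zero_apply]
  by_cases hm : ∃ s, φ.seq s = j
  · obtain ⟨s, hs⟩ := hm
    rw [psiStar_single hs, map_smul,
      psiStar_single_of_not_mem (SIM.not_mem_removeSIM hs), smul_zero]
  · push_neg at hm
    rw [psiStar_single_of_not_mem hm, map_zero]
theorem psi_basis_swap {φ : SIM} {i k : ℤ} (hki : k < i)
    (hi : ∀ s, φ.seq s ≠ i) (hk : ∀ s, φ.seq s ≠ k) :
    psi i (psi k (Finsupp.single φ 1)) = - psi k (psi i (Finsupp.single φ 1)) := by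
  have hsi := φ.wedgePos_spec i
  have hsk := φ.wedgePos_spec k
  have hpq : φ.wedgePos i ≤ φ.wedgePos k := by
    by_contra hc
    push_neg at hc
    have h1 := SIM.lt_of_lt_wedgePos hi hc
    omega
  have hi1 : ∀ s, (φ.insertSIM k hk).seq s ≠ i := by
    intro s hs
    rcases SIM.mem_insertSIM.1 ⟨s, hs⟩ with h | ⟨t, ht⟩
    · omega
    · exact hi t ht
  have hk2 : ∀ s, (φ.insertSIM i hi).seq s ≠ k := by
    intro s hs
    rcases SIM.mem_insertSIM.1 ⟨s, hs⟩ with h | ⟨t, ht⟩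
    · omega
    · exact hk t ht
  have hw1 : (φ.insertSIM k hk).wedgePos i = φ.wedgePos i := by
    apply SIM.wedgePos_eq
    · rw [SIM.insertSIM_seq]
      rcases Nat.lt_or_ge (φ.wedgePos i) (φ.wedgePos k) with h | h
      · rw [if_pos h]; exact hsi
      · have he : φ.wedgePos i = φ.wedgePos k := by omega
        rw [if_neg (by omega), if_pos he]; exact hki
    · intro t ht
      rw [SIM.insertSIM_seq, if_pos (by omega)]
      exact SIM.lt_of_lt_wedgePos hi ht
  have hw2 : (φ.insertSIM i hi).wedgePos k = φ.wedgePos k + 1 := by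
    apply SIM.wedgePos_eq
    · rw [SIM.insertSIM_seq, if_neg (by omega), if_neg (by omega)]
      simpa using hsk
    · intro t ht
      rw [SIM.insertSIM_seq]
      split_ifs with h1 h2
      · exact SIM.lt_of_lt_wedgePos hk (by omega)
      · omega
      · exact SIM.lt_of_lt_wedgePos hk (by omega)
  have hSIM : (φ.insertSIM k hk).insertSIM i hi1 = (φ.insertSIM i hi).insertSIM k hk2 := by
    apply SIM.ext'; funext t
    simp only [SIM.insertSIM_seq, hw1, hw2]
    split_ifs <;> first | rfl | omega | (congr 1; omega)
  rw [psi_single hk, psi_single hi, map_smul, map_smul, psi_single hi1, psi_single hk2,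
    hw1, hw2, hSIM, smul_smul, smul_smul, ← neg_smul]
  congr 1
  rw [pow_succ]
  ring
theorem psiStar_basis_swap {φ : SIM} {s t : ℕ} (hst : s < t) :
    psiStar (φ.seq s) (psiStar (φ.seq t) (Finsupp.single φ 1))
      = - psiStar (φ.seq t) (psiStar (φ.seq s) (Finsupp.single φ 1)) := by
  have h1 : (φ.removeSIM t).seq s = φ.seq s := by
    rw [SIM.removeSIM_seq, if_pos hst]
  have h2 : (φ.removeSIM s).seq (t - 1) = φ.seq t := by
    rw [SIM.removeSIM_seq, if_neg (by omega)]
    congr 1; omega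
  have hSIM : (φ.removeSIM t).removeSIM s = (φ.removeSIM s).removeSIM (t - 1) := by
    apply SIM.ext'; funext r
    simp only [SIM.removeSIM_seq]
    split_ifs <;> first | rfl | omega | (congr 1; omega)
  rw [psiStar_single (φ := φ) rfl, psiStar_single (φ := φ) rfl, map_smul, map_smul,
    psiStar_single h1, psiStar_single h2, hSIM, smul_smul, smul_smul, ← neg_smul]
  congr 1
  have he : (-1 : ℂ) ^ t = (-1 : ℂ) ^ (t - 1) * (-1) := by
    rw [← pow_succ]; congr 1; omega
  rw [he]; ring

theorem psi_anticomm (i k : ℤ) : psi i ∘ₗ psi k + psi k ∘ₗ psi i = 0 := by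
  by_cases hik : i = k
  · subst hik
    rw [psi_psi_self, add_zero]
  apply fock_ext
  intro φ
  simp only [LinearMap.add_apply, LinearMap.comp_apply, LinearMap.zero_apply]
  by_cases hmi : ∃ s, φ.seq s = i
  · obtain ⟨s, hs⟩ := hmi
    rw [psi_single_of_mem hs, map_zero, add_zero]
    by_cases hmk : ∃ u, φ.seq u = k
    · obtain ⟨u, hu⟩ := hmk
      rw [psi_single_of_mem hu, map_zero]
    · push_neg at hmk
      rw [psi_single hmk, map_smul]
      obtain ⟨t', ht'⟩ := (SIM.mem_insertSIM (hj := hmk)).2 (Or.inr ⟨s, hs⟩)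
      rw [psi_single_of_mem ht', smul_zero]
  · push_neg at hmi
    by_cases hmk : ∃ u, φ.seq u = k
    · obtain ⟨u, hu⟩ := hmk
      rw [psi_single_of_mem hu, map_zero, zero_add, psi_single hmi, map_smul]
      obtain ⟨t', ht'⟩ := (SIM.mem_insertSIM (hj := hmi)).2 (Or.inr ⟨u, hu⟩)
      rw [psi_single_of_mem ht', smul_zero]
    · push_neg at hmk
      rcases lt_or_gt_of_ne hik with h | h
      · rw [psi_basis_swap h hmk hmi]; abel
      · rw [psi_basis_swap h hmi hmk]; abel

theorem psiStar_anticomm (a b : ℤ) : psiStar a ∘ₗ psiStar b + psiStar b ∘ₗ psiStar a = 0 := by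
  by_cases hab : a = b
  · subst hab
    rw [psiStar_psiStar_self, add_zero]
  apply fock_ext
  intro φ
  simp only [LinearMap.add_apply, LinearMap.comp_apply, LinearMap.zero_apply]
  by_cases hma : ∃ s, φ.seq s = a
  · obtain ⟨s, hs⟩ := hma
    by_cases hmb : ∃ u, φ.seq u = b
    · obtain ⟨u, hu⟩ := hmb
      have hsu : s ≠ u := fun hc => hab (by rw [← hs, ← hu, hc])
      subst hs; subst hu
      rcases lt_or_gt_of_ne hsu with h | h
      · rw [psiStar_basis_swap h]; abel
      · rw [psiStar_basis_swap h]; abel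
    · push_neg at hmb
      rw [psiStar_single_of_not_mem hmb, map_zero, zero_add, psiStar_single hs, map_smul,
        psiStar_single_of_not_mem (φ := φ.removeSIM s) (fun u hc => ?_), smul_zero]
      obtain ⟨r, hr⟩ := (SIM.mem_removeSIM.1 ⟨u, hc⟩).1
      exact hmb r hr
  · push_neg at hma
    rw [psiStar_single_of_not_mem hma, map_zero, add_zero]
    by_cases hmb : ∃ u, φ.seq u = b
    · obtain ⟨u, hu⟩ := hmb
      rw [psiStar_single hu, map_smul, psiStar_single_of_not_mem (φ := φ.removeSIM u)
        (fun r hc => ?_), smul_zero]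
      obtain ⟨r', hr'⟩ := (SIM.mem_removeSIM.1 ⟨r, hc⟩).1
      exact hma r' hr'
    · push_neg at hmb
      rw [psiStar_single_of_not_mem hmb, map_zero]
theorem neg_one_pow_sq (s : ℕ) : ((-1 : ℂ) ^ s) * ((-1 : ℂ) ^ s) = 1 := by
  rw [← pow_add]
  exact Even.neg_one_pow ⟨s, rfl⟩

theorem psi_psiStar_anticomm (j a : ℤ) :
    psi j ∘ₗ psiStar a + psiStar a ∘ₗ psi j
      = if j = a then (LinearMap.id : FockF →ₗ[ℂ] FockF) else 0 := by
  apply fock_ext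
  intro φ
  simp only [LinearMap.add_apply, LinearMap.comp_apply]
  by_cases hja : j = a
  · subst hja
    rw [if_pos rfl, LinearMap.id_apply]
    by_cases hm : ∃ s, φ.seq s = j
    · obtain ⟨s, hs⟩ := hm
      rw [psi_single_of_mem hs, map_zero, add_zero, psiStar_single hs, map_smul,
        psi_single (SIM.not_mem_removeSIM hs), SIM.wedgePos_removeSIM hs,
        SIM.insert_removeSIM hs, smul_smul, neg_one_pow_sq, one_smul]
    · push_neg at hm
      rw [psiStar_single_of_not_mem hm, map_zero, zero_add, psi_single hm, map_smul,
        psiStar_single (SIM.insertSIM_seq_wedgePos φ j hm), SIM.remove_insertSIM hm,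
        smul_smul, neg_one_pow_sq, one_smul]
  · rw [if_neg hja, LinearMap.zero_apply]
    by_cases hma : ∃ s, φ.seq s = a
    · obtain ⟨s, hs⟩ := hma
      by_cases hmj : ∃ u, φ.seq u = j
      · obtain ⟨u, hu⟩ := hmj
        rw [psi_single_of_mem hu, map_zero, add_zero, psiStar_single hs, map_smul]
        obtain ⟨t', ht'⟩ := SIM.mem_removeSIM.2 ⟨⟨u, hu⟩, by rw [hs]; exact hja⟩
        rw [psi_single_of_mem ht', smul_zero]
      · push_neg at hmj
        -- main case: a ∈ φ at position s, j ∉ φ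
        have hjrem : ∀ t, (φ.removeSIM s).seq t ≠ j := by
          intro t ht
          obtain ⟨r, hr⟩ := (SIM.mem_removeSIM.1 ⟨t, ht⟩).1
          exact hmj r hr
        have hspec := φ.wedgePos_spec j
        have hsa : (φ.insertSIM j hmj).seq
            (if φ.wedgePos j ≤ s then s + 1 else s) = a := by
          split_ifs with h
          · rw [SIM.insertSIM_seq, if_neg (by omega), if_neg (by omega)]
            simpa using hs
          · rw [SIM.insertSIM_seq, if_pos (by omega)]
            exact hs
        have hw : (φ.removeSIM s).wedgePos j
            = if φ.wedgePos j ≤ s then φ.wedgePos j else φ.wedgePos j - 1 := by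
          split_ifs with h
          · apply SIM.wedgePos_eq
            · rw [SIM.removeSIM_seq]
              split_ifs with h1
              · exact hspec
              · have h2 : φ.wedgePos j = s := by omega
                rw [h2] at hspec ⊢
                have := φ.anti (show s < s + 1 by omega)
                omega
            · intro t ht
              rw [SIM.removeSIM_seq, if_pos (by omega)]
              exact SIM.lt_of_lt_wedgePos hmj ht
          · push_neg at h
            apply SIM.wedgePos_eq
            · rw [SIM.removeSIM_seq, if_neg (by omega)]
              rw [(by omega : φ.wedgePos j - 1 + 1 = φ.wedgePos j)]
              exact hspec
            · intro t ht
              rw [SIM.removeSIM_seq]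
              split_ifs with h1
              · exact SIM.lt_of_lt_wedgePos hmj (by omega)
              · exact SIM.lt_of_lt_wedgePos hmj (by omega)
        have hAB : (φ.removeSIM s).insertSIM j hjrem
            = (φ.insertSIM j hmj).removeSIM (if φ.wedgePos j ≤ s then s + 1 else s) := by
          apply SIM.ext'; funext t
          simp only [SIM.insertSIM_seq, SIM.removeSIM_seq, hw]
          split_ifs <;> first | rfl | omega | (congr 1; omega)
        rw [psiStar_single hs, map_smul, psi_single hjrem, psi_single hmj, map_smul,
          psiStar_single hsa, hAB, hw]
        split_ifs with h
        · rw [pow_succ]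
          module
        · rw [show ((-1:ℂ)^(φ.wedgePos j)) = (-1:ℂ)^(φ.wedgePos j - 1) * (-1) from by
            rw [← pow_succ]; congr 1; omega]
          module
    · push_neg at hma
      rw [psiStar_single_of_not_mem hma, map_zero, zero_add]
      by_cases hmj : ∃ u, φ.seq u = j
      · obtain ⟨u, hu⟩ := hmj
        rw [psi_single_of_mem hu, map_zero]
      · push_neg at hmj
        rw [psi_single hmj, map_smul, psiStar_single_of_not_mem (fun t ht => ?_), smul_zero]
        rcases SIM.mem_insertSIM.1 ⟨t, ht⟩ with h | ⟨r, hr⟩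
        · exact hja h.symm
        · exact hma r hr
private theorem quad_comm {R : Type*} [Ring R] (A B C D e1 e2 : R)
    (h1 : C * B + B * C = e1) (h2 : A * D + D * A = e2)
    (h3 : A * C + C * A = 0) (h4 : B * D + D * B = 0)
    (hc1 : A * e1 * D = e1 * (A * D)) (hc2 : C * e2 * B = e2 * (C * B)) :
    (A * B) * (C * D) - (C * D) * (A * B) = e1 * (A * D) - e2 * (C * B) := by
  have hBC : B * C = e1 - C * B := by
    rw [add_comm] at h1; exact eq_sub_of_add_eq h1
  have hAD : A * D = e2 - D * A := eq_sub_of_add_eq h2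
  have h3' : A * C = -(C * A) := by rwa [eq_neg_iff_add_eq_zero]
  have h4' : B * D = -(D * B) := by rwa [eq_neg_iff_add_eq_zero]
  have key : (A * B) * (C * D) = e1 * (A * D) - e2 * (C * B) + (C * D) * (A * B) := by
    calc (A * B) * (C * D) = A * (B * C) * D := by noncomm_ring
      _ = A * (e1 - C * B) * D := by rw [hBC]
      _ = A * e1 * D - (A * C) * (B * D) := by noncomm_ring
      _ = e1 * (A * D) - (A * C) * (B * D) := by rw [hc1]
      _ = e1 * (A * D) - (-(C * A)) * (-(D * B)) := by rw [h3', h4']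
      _ = e1 * (A * D) - C * (A * D) * B := by noncomm_ring
      _ = e1 * (A * D) - C * (e2 - D * A) * B := by rw [hAD]
      _ = e1 * (A * D) - (C * e2 * B - C * D * (A * B)) := by noncomm_ring
      _ = e1 * (A * D) - (e2 * (C * B) - C * D * (A * B)) := by rw [hc2]
      _ = e1 * (A * D) - e2 * (C * B) + (C * D) * (A * B) := by noncomm_ring
  rw [key]; abel

theorem TT_comm (j a k b : ℤ) :
    ((psi j ∘ₗ psiStar a) ∘ₗ (psi k ∘ₗ psiStar b))
      - ((psi k ∘ₗ psiStar b) ∘ₗ (psi j ∘ₗ psiStar a))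
      = (if k = a then psi j ∘ₗ psiStar b else 0)
        - (if b = j then psi k ∘ₗ psiStar a else 0) := by
  have h1 := psi_psiStar_anticomm k a
  have h2 := psi_psiStar_anticomm j b
  have h3 : psi j ∘ₗ psi k + psi k ∘ₗ psi j = 0 := psi_anticomm j k
  have h4 : psiStar a ∘ₗ psiStar b + psiStar b ∘ₗ psiStar a = 0 := psiStar_anticomm a b
  have h3' : (psi j : FockF →ₗ[ℂ] FockF) * psi k + psi k * psi j = 0 := h3
  have h4' : (psiStar a : FockF →ₗ[ℂ] FockF) * psiStar b + psiStar b * psiStar a = 0 := h4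
  have h1' : (psi k : FockF →ₗ[ℂ] FockF) * psiStar a + psiStar a * psi k
      = if k = a then 1 else 0 := h1
  have h2' : (psi j : FockF →ₗ[ℂ] FockF) * psiStar b + psiStar b * psi j
      = if j = b then 1 else 0 := h2
  have main := quad_comm (psi j) (psiStar a) (psi k) (psiStar b)
    (if k = a then 1 else 0) (if j = b then 1 else 0)
    h1' h2' h3' h4'
    (by split_ifs <;> simp) (by split_ifs <;> simp)
  simp only [Module.End.mul_eq_comp] at main
  rw [main]
  congr 1
  · split_ifs <;> simp [Module.End.one_eq_id, Module.End.mul_eq_comp]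
  · rcases eq_or_ne b j with h | h
    · rw [if_pos h, if_pos h.symm]
      simp [Module.End.one_eq_id, Module.End.mul_eq_comp]
    · rw [if_neg h, if_neg (Ne.symm h)]
      simp
theorem single_eq_smul (φ : SIM) (c : ℂ) :
    (Finsupp.single φ c : FockF) = c • Finsupp.single φ 1 := by
  rw [Finsupp.smul_single, smul_eq_mul, mul_one]

theorem TT_ne_zero {φ : SIM} {j k : ℤ} (hjk : j ≠ k)
    (h : psi j (psiStar k (Finsupp.single φ 1)) ≠ 0) :
    (∃ s, φ.seq s = k) ∧ (∀ s, φ.seq s ≠ j) := by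
  by_cases hk : ∃ s, φ.seq s = k
  · obtain ⟨s, hs⟩ := hk
    refine ⟨⟨s, hs⟩, fun t ht => ?_⟩
    have hjm : ∃ r, (φ.removeSIM s).seq r = j :=
      SIM.mem_removeSIM.2 ⟨⟨t, ht⟩, by rw [hs]; exact hjk⟩
    obtain ⟨r, hr⟩ := hjm
    exact h (by rw [psiStar_single hs, map_smul, psi_single_of_mem hr, smul_zero])
  · push_neg at hk
    exact absurd (by rw [psiStar_single_of_not_mem hk, map_zero]) h

theorem charge_removeSIM {φ : SIM} {m : ℤ} (s : ℕ) (h : φ.HasCharge m) :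
    (φ.removeSIM s).HasCharge (m - 1) := by
  obtain ⟨N, hN⟩ := h
  refine ⟨max N s, fun k hk => ?_⟩
  rw [SIM.removeSIM_seq, if_neg (by omega)]
  have := hN (k + 1) (by omega)
  omega

theorem charge_insertSIM {φ : SIM} {m : ℤ} {j : ℤ} (hj : ∀ s, φ.seq s ≠ j)
    (h : φ.HasCharge m) : (φ.insertSIM j hj).HasCharge (m + 1) := by
  obtain ⟨N, hN⟩ := h
  refine ⟨max (N + 1) (φ.wedgePos j + 1), fun k hk => ?_⟩
  rw [SIM.insertSIM_seq, if_neg (by omega), if_neg (by omega)]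
  have := hN (k - 1) (by omega)
  omega

theorem charge_TT {φ ψ : SIM} {j k : ℤ} {c : ℂ} (hc : c ≠ 0) {m : ℤ}
    (h : φ.HasCharge m)
    (he : psi j (psiStar k (Finsupp.single φ 1)) = Finsupp.single ψ c) :
    ψ.HasCharge m := by
  by_cases hk : ∃ s, φ.seq s = k
  · obtain ⟨s, hs⟩ := hk
    rw [psiStar_single hs, map_smul] at he
    by_cases hj : ∀ t, (φ.removeSIM s).seq t ≠ j
    · rw [psi_single hj, smul_smul] at he
      have h2 : ψ = (φ.removeSIM s).insertSIM j hj := by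
        by_contra hne
        have := DFunLike.congr_fun he ψ
        rw [Finsupp.smul_apply, Finsupp.single_eq_same,
          Finsupp.single_eq_of_ne' (fun hx => hne hx.symm), smul_zero] at this
        exact hc this.symm
      subst h2
      have := charge_insertSIM hj (charge_removeSIM s h)
      simpa using this
    · push_neg at hj
      obtain ⟨t, ht⟩ := hj
      rw [psi_single_of_mem ht, smul_zero] at he
      exact absurd he.symm (by simp [Finsupp.single_eq_zero, hc])
  · push_neg at hk
    rw [psiStar_single_of_not_mem hk, map_zero] at he
    exact absurd he.symm (by simp [Finsupp.single_eq_zero, hc])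

theorem TT_supp_finite {φ : SIM} (n : ℤ) (hn : n ≠ 0) :
    (Function.support fun j : ℤ => psi j (psiStar (j + n) (Finsupp.single φ 1))).Finite := by
  obtain ⟨m, N, hN⟩ := φ.ex_charge
  apply Set.Finite.subset (Set.finite_Icc (m - N + 1) (φ.seq 0 - n))
  intro j hj
  obtain ⟨⟨s, hs⟩, hnm⟩ := TT_ne_zero (by omega) hj
  constructor
  · by_contra hc
    push_neg at hc
    obtain ⟨t, ht⟩ := SIM.mem_of_le hN (j := j) (by omega)
    exact hnm t ht
  · have := hs ▸ φ.seq_le_seq0 s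
    omega

theorem TT_supp_finite' (n : ℤ) (hn : n ≠ 0) (x : FockF) :
    (Function.support fun j : ℤ => psi j (psiStar (j + n) x)).Finite := by
  induction x using Finsupp.induction_linear with
  | zero => simp
  | add f g hf hg =>
    apply Set.Finite.subset (hf.union hg)
    intro j hj
    simp only [map_add, Function.mem_support] at hj
    by_contra hc
    simp only [Set.mem_union, Function.mem_support, not_or, not_not] at hc
    rw [hc.1, hc.2, add_zero] at hj
    exact hj rfl
  | single φ c =>
    apply Set.Finite.subset (TT_supp_finite n hn (φ := φ))
    intro j hj
    simp only [Function.mem_support] at hj ⊢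
    intro hc
    rw [single_eq_smul, map_smul, map_smul, hc, smul_zero] at hj
    exact hj rfl

theorem alpha_apply {n : ℤ} (hn : n ≠ 0) (x : FockF) :
    alpha n x = ∑ᶠ j : ℤ, psi j (psiStar (j + n) x) := by
  induction x using Finsupp.induction_linear with
  | zero => simp
  | add f g hf hg =>
    rw [map_add, hf, hg, ← finsum_add_distrib (TT_supp_finite' n hn f) (TT_supp_finite' n hn g)]
    congr 1
    funext j
    rw [map_add, map_add]
  | single φ c =>
    rw [single_eq_smul, map_smul]
    have h1 : alpha n (Finsupp.single φ 1)
        = ∑ᶠ j : ℤ, psi j (psiStar (j + n) (Finsupp.single φ 1)) := by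
      rw [alpha, lift_single, if_neg hn]
    have h2 := AddMonoidHom.map_finsum (DistribMulAction.toAddMonoidHom FockF c)
      (TT_supp_finite n hn (φ := φ))
    simp only [DistribMulAction.toAddMonoidHom_apply] at h2
    rw [h1, h2]
    congr 1
    funext j
    rw [map_smul, map_smul]
open Classical in
theorem TT_diag (j : ℤ) (φ : SIM) :
    psi j (psiStar j (Finsupp.single φ 1))
      = if ∃ s, φ.seq s = j then Finsupp.single φ 1 else 0 := by
  split_ifs with h
  · obtain ⟨s, hs⟩ := h
    rw [psiStar_single hs, map_smul, psi_single (SIM.not_mem_removeSIM hs),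
      SIM.wedgePos_removeSIM hs, SIM.insert_removeSIM hs, smul_smul, neg_one_pow_sq, one_smul]
  · push_neg at h
    rw [psiStar_single_of_not_mem h, map_zero]

open Classical in
theorem TT_diag' (j : ℤ) (φ : SIM) :
    psiStar j (psi j (Finsupp.single φ 1))
      = if ∃ s, φ.seq s = j then 0 else Finsupp.single φ 1 := by
  split_ifs with h
  · obtain ⟨s, hs⟩ := h
    rw [psi_single_of_mem hs, map_zero]
  · push_neg at h
    rw [psi_single h, map_smul, psiStar_single (SIM.insertSIM_seq_wedgePos φ j h),
      SIM.remove_insertSIM h, smul_smul, neg_one_pow_sq, one_smul]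

theorem single_one_ne_zero (φ : SIM) : (Finsupp.single φ 1 : FockF) ≠ 0 :=
  fun h => one_ne_zero (Finsupp.single_eq_zero.1 h)

open Classical in
theorem alpha_zero_single {φ : SIM} {m : ℤ} {N : ℕ} (hN : ∀ k, N ≤ k → φ.seq k = m - (k : ℤ)) :
    alpha 0 (Finsupp.single φ 1) = (m : ℂ) • Finsupp.single φ 1 := by
  set K : ℕ := N + m.toNat + 1 with hK
  have hNK : ∀ k, K ≤ k → φ.seq k = m - (k : ℤ) := fun k hk => hN k (by omega)
  have hseqK : ∀ s : ℕ, K ≤ s → φ.seq s < 0 := by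
    intro s hs
    rw [hNK s hs]
    omega
  set d := φ.seq 0 with hd
  set SP := (Finset.range K).filter (fun s => 0 < φ.seq s) with hSP
  set W : Finset ℤ := Finset.Icc (m - K + 1) 0 with hW
  -- first sum
  have hA : (∑ᶠ (j : ℤ) (_ : 0 < j), psi j (psiStar j (Finsupp.single φ 1)))
      = (((Finset.Icc (1:ℤ) d).filter (fun j => ∃ s, φ.seq s = j)).card : ℂ)
        • Finsupp.single φ 1 := by
    have hconv : (∑ᶠ (j : ℤ) (_ : 0 < j), psi j (psiStar j (Finsupp.single φ 1)))
        = ∑ᶠ (j : ℤ) (_ : j ∈ {x : ℤ | 0 < x}), psi j (psiStar j (Finsupp.single φ 1)) := rfl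
    rw [hconv, finsum_mem_eq_sum_of_inter_support_eq _ (t := Finset.Icc (1:ℤ) d) ?_]
    · simp only [TT_diag]
      rw [← Finset.sum_filter, Finset.sum_const, Nat.cast_smul_eq_nsmul]
    · ext j
      simp only [Set.mem_inter_iff, Function.mem_support, Set.mem_setOf_eq,
        Finset.coe_Icc, Set.mem_Icc, TT_diag]
      constructor
      · rintro ⟨h1, h2⟩
        have hex : ∃ s, φ.seq s = j := by
          by_contra hc
          rw [if_neg hc] at h2
          exact h2 rfl
        obtain ⟨s, hs⟩ := hex
        exact ⟨⟨by omega, hs ▸ φ.seq_le_seq0 s⟩, h2⟩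
      · rintro ⟨⟨h1, h2⟩, h3⟩
        exact ⟨by omega, h3⟩
  -- second sum
  have hB : (∑ᶠ (j : ℤ) (_ : j ≤ 0), psiStar j (psi j (Finsupp.single φ 1)))
      = ((W.filter (fun j => ¬∃ s, φ.seq s = j)).card : ℂ) • Finsupp.single φ 1 := by
    have hconv : (∑ᶠ (j : ℤ) (_ : j ≤ 0), psiStar j (psi j (Finsupp.single φ 1)))
        = ∑ᶠ (j : ℤ) (_ : j ∈ {x : ℤ | x ≤ 0}), psiStar j (psi j (Finsupp.single φ 1)) := rfl
    rw [hconv, finsum_mem_eq_sum_of_inter_support_eq _ (t := W) ?_]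
    · simp only [TT_diag']
      have : ∀ j ∈ W, (if ∃ s, φ.seq s = j then (0:FockF) else Finsupp.single φ 1)
          = if ¬∃ s, φ.seq s = j then Finsupp.single φ 1 else 0 := by
        intro j _
        split_ifs with h1 h2 <;> first | rfl | omega | tauto
      rw [Finset.sum_congr rfl this, ← Finset.sum_filter, Finset.sum_const,
        Nat.cast_smul_eq_nsmul]
    · ext j
      simp only [Set.mem_inter_iff, Function.mem_support, Set.mem_setOf_eq,
        hW, Finset.coe_Icc, Set.mem_Icc, TT_diag']
      constructor
      · rintro ⟨h1, h2⟩
        have hnm : ¬∃ s, φ.seq s = j := by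
          by_contra hc
          rw [if_pos hc] at h2
          exact h2 rfl
        refine ⟨⟨?_, h1⟩, h2⟩
        by_contra hc
        push_neg at hc
        exact hnm (SIM.mem_of_le hNK (by omega))
      · rintro ⟨⟨h1, h2⟩, h3⟩
        exact ⟨h2, h3⟩
  -- cardinality of A-set
  have hAset : (Finset.Icc (1:ℤ) d).filter (fun j => ∃ s, φ.seq s = j) = SP.image φ.seq := by
    ext j
    simp only [Finset.mem_filter, Finset.mem_Icc, Finset.mem_image, hSP, Finset.mem_range]
    constructor
    · rintro ⟨⟨h1, h2⟩, s, hs⟩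
      refine ⟨s, ⟨?_, by omega⟩, hs⟩
      by_contra hc
      have := hseqK s (by omega)
      omega
    · rintro ⟨s, ⟨hsK, hpos⟩, rfl⟩
      exact ⟨⟨by omega, φ.seq_le_seq0 s⟩, s, rfl⟩
  have hAcard : ((Finset.Icc (1:ℤ) d).filter (fun j => ∃ s, φ.seq s = j)).card = SP.card := by
    rw [hAset]
    exact Finset.card_image_of_injOn (fun a _ b _ h => φ.seq_inj h)
  -- W members with mem = image of complement indices
  have hBset : W.filter (fun j => ∃ s, φ.seq s = j)
      = ((Finset.range K).filter (fun s => ¬ 0 < φ.seq s)).image φ.seq := by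
    ext j
    simp only [Finset.mem_filter, Finset.mem_Icc, Finset.mem_image, Finset.mem_range, hW]
    constructor
    · rintro ⟨⟨h1, h2⟩, s, hs⟩
      refine ⟨s, ⟨?_, by omega⟩, hs⟩
      by_contra hc
      have := hNK s (by omega)
      omega
    · rintro ⟨s, ⟨hsK, hpos⟩, rfl⟩
      refine ⟨⟨?_, by omega⟩, s, rfl⟩
      have h5 : φ.seq K < φ.seq s := φ.anti hsK
      have h6 := hNK K le_rfl
      omega
  have hBcard2 : (W.filter (fun j => ∃ s, φ.seq s = j)).card = K - SP.card := by
    rw [hBset, Finset.card_image_of_injOn (fun a _ b _ h => φ.seq_inj h)]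
    have h7 : SP.card + ((Finset.range K).filter (fun s => ¬ 0 < φ.seq s)).card = K := by
      have h8 := Finset.card_filter_add_card_filter_not
        (s := Finset.range K) (p := fun s => 0 < φ.seq s)
      rw [Finset.card_range] at h8
      rw [hSP]
      simpa using h8
    omega
  have hWcard : W.card = (K - m).toNat := by
    rw [hW, Int.card_Icc]
    congr 1
    omega
  have hsplit : (W.filter (fun j => ∃ s, φ.seq s = j)).card
      + (W.filter (fun j => ¬∃ s, φ.seq s = j)).card = W.card := by
    have h9 := Finset.card_filter_add_card_filter_not
      (s := W) (p := fun j => ∃ s, φ.seq s = j)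
    simpa using h9
  have hfle : (W.filter (fun j => ∃ s, φ.seq s = j)).card ≤ W.card :=
    Finset.card_filter_le _ _
  have hSPle : SP.card ≤ K := by
    rw [hSP]
    exact (Finset.card_filter_le _ _).trans (le_of_eq (Finset.card_range K))
  have hint : ((SP.card : ℤ)) - ((W.filter (fun j => ¬∃ s, φ.seq s = j)).card : ℤ) = m := by
    omega
  rw [alpha, lift_single, if_pos rfl, hA, hB, hAcard, ← sub_smul]
  congr 1
  exact_mod_cast hint
theorem alpha_zero_homog {x : FockF} {m : ℤ} (hx : ∀ ψ ∈ x.support, ψ.HasCharge m) :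
    alpha 0 x = (m : ℂ) • x := by
  have key : ∀ ψ ∈ x.support, alpha 0 (Finsupp.single ψ (x ψ))
      = (m : ℂ) • Finsupp.single ψ (x ψ) := by
    intro ψ hψ
    obtain ⟨N, hNc⟩ := hx ψ hψ
    rw [single_eq_smul, map_smul, alpha_zero_single hNc, smul_comm]
  calc alpha 0 x = alpha 0 (x.sum fun ψ c => Finsupp.single ψ c) := by rw [Finsupp.sum_single]
    _ = x.sum fun ψ c => alpha 0 (Finsupp.single ψ c) := map_finsuppSum _ _ _
    _ = x.sum fun ψ c => (m : ℂ) • Finsupp.single ψ c := Finsupp.sum_congr key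
    _ = (m : ℂ) • x.sum fun ψ c => Finsupp.single ψ c := (Finsupp.smul_sum).symm
    _ = (m : ℂ) • x := by rw [Finsupp.sum_single]

theorem TT_structure (j k : ℤ) (φ : SIM) {m : ℤ} (h : φ.HasCharge m) :
    psi j (psiStar k (Finsupp.single φ 1)) = 0 ∨
      ∃ (ψ : SIM) (c : ℂ), c ≠ 0 ∧ psi j (psiStar k (Finsupp.single φ 1)) = Finsupp.single ψ c
        ∧ ψ.HasCharge m := by
  by_cases hk : ∃ s, φ.seq s = k
  · obtain ⟨s, hs⟩ := hk
    by_cases hj : ∀ t, (φ.removeSIM s).seq t ≠ j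
    · right
      refine ⟨(φ.removeSIM s).insertSIM j hj,
        (-1 : ℂ) ^ s * (-1) ^ ((φ.removeSIM s).wedgePos j), ?_, ?_, ?_⟩
      · apply mul_ne_zero <;> exact pow_ne_zero _ (by norm_num)
      · rw [psiStar_single hs, map_smul, psi_single hj, smul_smul, ← single_eq_smul]
      · have := charge_insertSIM hj (charge_removeSIM s h)
        simpa using this
    · left
      push_neg at hj
      obtain ⟨t, ht⟩ := hj
      rw [psiStar_single hs, map_smul, psi_single_of_mem ht, smul_zero]
  · left
    push_neg at hk
    rw [psiStar_single_of_not_mem hk, map_zero]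

theorem alpha_support_charge {n : ℤ} (hn : n ≠ 0) {φ : SIM} {m : ℤ} (h : φ.HasCharge m) :
    ∀ ψ ∈ (alpha n (Finsupp.single φ 1)).support, ψ.HasCharge m := by
  intro ψ hψ
  rw [Finsupp.mem_support_iff] at hψ
  rw [alpha_apply hn, finsum_eq_sum _ (TT_supp_finite n hn)] at hψ
  have hex : ∃ j ∈ (TT_supp_finite n hn (φ := φ)).toFinset,
      (psi j (psiStar (j + n) (Finsupp.single φ 1))) ψ ≠ 0 := by
    by_contra hc
    push_neg at hc
    rw [Finset.sum_apply'] at hψ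
    exact hψ (Finset.sum_eq_zero hc)
  obtain ⟨j, _, hj⟩ := hex
  rcases TT_structure j (j + n) φ h with h0 | ⟨ψ', c, hc, he, hch⟩
  · rw [h0] at hj
    simp at hj
  · rw [he] at hj
    have : ψ = ψ' := by
      by_contra hne
      rw [Finsupp.single_eq_of_ne' (fun hx => hne hx.symm)] at hj
      exact hj rfl
    subst this
    exact hch

theorem alpha_zero_comm (n : ℤ) :
    alpha 0 ∘ₗ alpha n - alpha n ∘ₗ alpha 0 = 0 := by
  by_cases hn : n = 0
  · subst hn; exact sub_self (alpha 0 ∘ₗ alpha 0)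
  apply fock_ext
  intro φ
  obtain ⟨m, N, hN⟩ := φ.ex_charge
  simp only [LinearMap.sub_apply, LinearMap.comp_apply, LinearMap.zero_apply]
  rw [alpha_zero_homog (alpha_support_charge hn ⟨N, hN⟩), alpha_zero_single hN, map_smul,
    sub_self]
theorem outer_bound {φ : SIM} {mc : ℤ} {N : ℕ} (hN : ∀ k, N ≤ k → φ.seq k = mc - (k : ℤ))
    {nn : ℤ} (hn : nn ≠ 0) {k : ℤ}
    (h : psi k (psiStar (k + nn) (Finsupp.single φ 1)) ≠ 0) :
    mc - N < k ∧ k + nn ≤ φ.seq 0 := by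
  obtain ⟨⟨s, hs⟩, hnm⟩ := TT_ne_zero (by omega) h
  constructor
  · by_contra hc
    push_neg at hc
    obtain ⟨t, ht⟩ := SIM.mem_of_le hN (j := k) (by omega)
    exact hnm t ht
  · exact hs ▸ φ.seq_le_seq0 s

theorem inner_bound {φ : SIM} {mc : ℤ} {N : ℕ} (hN : ∀ k, N ≤ k → φ.seq k = mc - (k : ℤ))
    {mm nn : ℤ} (hm : mm ≠ 0) (hn : nn ≠ 0) {k j : ℤ}
    (h : psi j (psiStar (j + mm) (psi k (psiStar (k + nn) (Finsupp.single φ 1)))) ≠ 0) :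
    mc - N - nn.natAbs ≤ j ∧ j ≤ φ.seq 0 + nn.natAbs + mm.natAbs := by
  have hinner : psi k (psiStar (k + nn) (Finsupp.single φ 1)) ≠ 0 :=
    fun h0 => h (by rw [h0, map_zero, map_zero])
  have hkb := outer_bound hN hn hinner
  obtain ⟨s, hs⟩ : ∃ s, φ.seq s = k + nn := (TT_ne_zero (by omega) hinner).1
  have hkm : ∀ t, φ.seq t ≠ k := (TT_ne_zero (by omega) hinner).2
  have hrem : ∀ t, (φ.removeSIM s).seq t ≠ k := by
    intro t ht
    obtain ⟨r, hr⟩ := (SIM.mem_removeSIM.1 ⟨t, ht⟩).1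
    exact hkm r hr
  rw [psiStar_single hs, map_smul, psi_single hrem, map_smul, map_smul] at h
  have h' : psi j (psiStar (j + mm)
      (Finsupp.single ((φ.removeSIM s).insertSIM k hrem) 1)) ≠ 0 := by
    intro h0
    simp only [map_smul, h0, smul_zero] at h
    exact h rfl
  obtain ⟨⟨t, ht⟩, hjm⟩ := TT_ne_zero (by omega) h'
  have hmem1 : j + mm = k ∨ ∃ r, φ.seq r = j + mm := by
    rcases SIM.mem_insertSIM.1 ⟨t, ht⟩ with h1 | hx
    · exact Or.inl h1
    · exact Or.inr (SIM.mem_removeSIM.1 hx).1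
  have hmem2 : (¬ ∃ r, φ.seq r = j) ∨ j = k + nn := by
    by_cases hjj : ∃ r, φ.seq r = j
    · right
      by_contra hne
      obtain ⟨r, hr⟩ := hjj
      obtain ⟨t', ht'⟩ : ∃ t', (φ.removeSIM s).seq t' = j :=
        SIM.mem_removeSIM.2 ⟨⟨r, hr⟩, by rw [hs]; exact hne⟩
      obtain ⟨u, hu⟩ : ∃ u, ((φ.removeSIM s).insertSIM k hrem).seq u = j :=
        SIM.mem_insertSIM.2 (Or.inr ⟨t', ht'⟩)
      exact hjm u hu
    · exact Or.inl hjj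
  constructor
  · rcases hmem2 with h2 | h2
    · by_contra hc
      push_neg at hc
      exact h2 (SIM.mem_of_le hN (by omega))
    · have := hkb.1
      omega
  · rcases hmem1 with h1 | ⟨r, hr⟩
    · have := hkb.2
      omega
    · have := hr ▸ φ.seq_le_seq0 r
      omega

theorem comm_reduce {m n : ℤ} (hm : m ≠ 0) (hn : n ≠ 0) (φ : SIM) (S : Finset ℤ)
    (hS1 : ∀ k, psi k (psiStar (k + n) (Finsupp.single φ 1)) ≠ 0 → k ∈ S)
    (hS1' : ∀ k, psi k (psiStar (k + m) (Finsupp.single φ 1)) ≠ 0 → k ∈ S)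
    (hS2 : ∀ k j, psi j (psiStar (j + m) (psi k (psiStar (k + n)
      (Finsupp.single φ 1)))) ≠ 0 → j ∈ S)
    (hS2' : ∀ k j, psi j (psiStar (j + n) (psi k (psiStar (k + m)
      (Finsupp.single φ 1)))) ≠ 0 → j ∈ S) :
    (alpha m ∘ₗ alpha n - alpha n ∘ₗ alpha m) (Finsupp.single φ 1)
      = ∑ j ∈ S, ((if j + m ∈ S then psi j (psiStar (j + m + n) (Finsupp.single φ 1)) else 0)
          - (if j + n ∈ S then psi j (psiStar (j + n + m) (Finsupp.single φ 1)) else 0)) := by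
  have e1 : alpha n (Finsupp.single φ 1)
      = ∑ k ∈ S, psi k (psiStar (k + n) (Finsupp.single φ 1)) := by
    rw [alpha_apply hn]
    exact finsum_eq_sum_of_support_subset _ (fun k hk => Finset.mem_coe.2 (hS1 k hk))
  have e1' : alpha m (Finsupp.single φ 1)
      = ∑ k ∈ S, psi k (psiStar (k + m) (Finsupp.single φ 1)) := by
    rw [alpha_apply hm]
    exact finsum_eq_sum_of_support_subset _ (fun k hk => Finset.mem_coe.2 (hS1' k hk))
  have e2 : alpha m (alpha n (Finsupp.single φ 1))
      = ∑ j ∈ S, ∑ k ∈ S, psi j (psiStar (j + m)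
          (psi k (psiStar (k + n) (Finsupp.single φ 1)))) := by
    rw [alpha_apply hm, e1]
    have hfun : (fun j : ℤ => psi j (psiStar (j + m)
        (∑ k ∈ S, psi k (psiStar (k + n) (Finsupp.single φ 1)))))
        = fun j : ℤ => ∑ k ∈ S, psi j (psiStar (j + m)
            (psi k (psiStar (k + n) (Finsupp.single φ 1)))) := by
      funext j
      rw [map_sum, map_sum]
    rw [hfun]
    apply finsum_eq_sum_of_support_subset
    intro j hj
    apply Finset.mem_coe.2
    have : ∃ k ∈ S, psi j (psiStar (j + m)
        (psi k (psiStar (k + n) (Finsupp.single φ 1)))) ≠ 0 := by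
      by_contra hc
      push_neg at hc
      exact hj (Finset.sum_eq_zero hc)
    obtain ⟨k, _, hk⟩ := this
    exact hS2 k j hk
  have e2' : alpha n (alpha m (Finsupp.single φ 1))
      = ∑ j ∈ S, ∑ k ∈ S, psi j (psiStar (j + n)
          (psi k (psiStar (k + m) (Finsupp.single φ 1)))) := by
    rw [alpha_apply hn, e1']
    have hfun : (fun j : ℤ => psi j (psiStar (j + n)
        (∑ k ∈ S, psi k (psiStar (k + m) (Finsupp.single φ 1)))))
        = fun j : ℤ => ∑ k ∈ S, psi j (psiStar (j + n)
            (psi k (psiStar (k + m) (Finsupp.single φ 1)))) := by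
      funext j
      rw [map_sum, map_sum]
    rw [hfun]
    apply finsum_eq_sum_of_support_subset
    intro j hj
    apply Finset.mem_coe.2
    have : ∃ k ∈ S, psi j (psiStar (j + n)
        (psi k (psiStar (k + m) (Finsupp.single φ 1)))) ≠ 0 := by
      by_contra hc
      push_neg at hc
      exact hj (Finset.sum_eq_zero hc)
    obtain ⟨k, _, hk⟩ := this
    exact hS2' k j hk
  rw [LinearMap.sub_apply, LinearMap.comp_apply, LinearMap.comp_apply, e2, e2']
  rw [Finset.sum_comm (s := S) (t := S) (f := fun j k => psi j (psiStar (j + n)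
    (psi k (psiStar (k + m) (Finsupp.single φ 1)))))]
  rw [← Finset.sum_sub_distrib]
  have hterm : ∀ j ∈ S, ∀ k ∈ S, psi j (psiStar (j + m)
        (psi k (psiStar (k + n) (Finsupp.single φ 1))))
      - psi k (psiStar (k + n) (psi j (psiStar (j + m) (Finsupp.single φ 1))))
      = (if k = j + m then psi j (psiStar (k + n) (Finsupp.single φ 1)) else 0)
        - (if k + n = j then psi k (psiStar (j + m) (Finsupp.single φ 1)) else 0) := by
    intro j _ k _
    have hcomm := DFunLike.congr_fun (TT_comm j (j + m) k (k + n)) (Finsupp.single φ 1)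
    simp only [LinearMap.sub_apply, LinearMap.comp_apply] at hcomm
    rw [hcomm]
    congr 1
    · rcases eq_or_ne k (j + m) with h | h
      · rw [if_pos h, if_pos h, LinearMap.comp_apply]
      · rw [if_neg h, if_neg h, LinearMap.zero_apply]
    · rcases eq_or_ne (k + n) j with h | h
      · rw [if_pos h, if_pos h, LinearMap.comp_apply]
      · rw [if_neg h, if_neg h, LinearMap.zero_apply]
  have hsplit : ∑ j ∈ S, ∑ k ∈ S, (psi j (psiStar (j + m)
        (psi k (psiStar (k + n) (Finsupp.single φ 1))))
      - psi k (psiStar (k + n) (psi j (psiStar (j + m) (Finsupp.single φ 1)))))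
      = (∑ j ∈ S, ∑ k ∈ S, if k = j + m
          then psi j (psiStar (k + n) (Finsupp.single φ 1)) else 0)
        - ∑ j ∈ S, ∑ k ∈ S, if k + n = j
          then psi k (psiStar (j + m) (Finsupp.single φ 1)) else 0 := by
    rw [← Finset.sum_sub_distrib]
    apply Finset.sum_congr rfl
    intro j hj
    rw [← Finset.sum_sub_distrib]
    apply Finset.sum_congr rfl
    intro k hk
    exact hterm j hj k hk
  have hinner : ∀ j ∈ S, (∑ k ∈ S, psi j (psiStar (j + m)
        (psi k (psiStar (k + n) (Finsupp.single φ 1))))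
      - ∑ k ∈ S, psi k (psiStar (k + n) (psi j (psiStar (j + m) (Finsupp.single φ 1)))))
      = ∑ k ∈ S, (psi j (psiStar (j + m) (psi k (psiStar (k + n) (Finsupp.single φ 1))))
        - psi k (psiStar (k + n) (psi j (psiStar (j + m) (Finsupp.single φ 1))))) := by
    intro j _
    rw [Finset.sum_sub_distrib]
  rw [Finset.sum_congr rfl hinner, hsplit]
  have hD1 : (∑ j ∈ S, ∑ k ∈ S, if k = j + m
        then psi j (psiStar (k + n) (Finsupp.single φ 1)) else 0)
      = ∑ j ∈ S, (if j + m ∈ S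
        then psi j (psiStar (j + m + n) (Finsupp.single φ 1)) else 0) := by
    apply Finset.sum_congr rfl
    intro j _
    exact Finset.sum_ite_eq' S (j + m) (fun k => psi j (psiStar (k + n) (Finsupp.single φ 1)))
  have hD2 : (∑ j ∈ S, ∑ k ∈ S, if k + n = j
        then psi k (psiStar (j + m) (Finsupp.single φ 1)) else 0)
      = ∑ j ∈ S, (if j + n ∈ S
        then psi j (psiStar (j + n + m) (Finsupp.single φ 1)) else 0) := by
    rw [Finset.sum_comm]
    apply Finset.sum_congr rfl
    intro k _
    exact Finset.sum_ite_eq S (k + n) (fun j => psi k (psiStar (j + m) (Finsupp.single φ 1)))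
  rw [hD1, hD2, Finset.sum_sub_distrib]
theorem key_ne {m n : ℤ} (hm : m ≠ 0) (hn : n ≠ 0) (hmn : m + n ≠ 0) :
    alpha m ∘ₗ alpha n - alpha n ∘ₗ alpha m = 0 := by
  apply fock_ext
  intro φ
  obtain ⟨mc, N, hN⟩ := φ.ex_charge
  set S : Finset ℤ := Finset.Icc (mc - N - (m.natAbs + n.natAbs) - 1)
    (φ.seq 0 + m.natAbs + n.natAbs + 1) with hS
  have hS1 : ∀ k, psi k (psiStar (k + n) (Finsupp.single φ 1)) ≠ 0 → k ∈ S := by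
    intro k hk
    have := outer_bound hN hn hk
    simp only [hS, Finset.mem_Icc]
    omega
  have hS1' : ∀ k, psi k (psiStar (k + m) (Finsupp.single φ 1)) ≠ 0 → k ∈ S := by
    intro k hk
    have := outer_bound hN hm hk
    simp only [hS, Finset.mem_Icc]
    omega
  have hS2 : ∀ k j, psi j (psiStar (j + m) (psi k (psiStar (k + n)
      (Finsupp.single φ 1)))) ≠ 0 → j ∈ S := by
    intro k j hk
    have := inner_bound hN hm hn hk
    simp only [hS, Finset.mem_Icc]
    omega
  have hS2' : ∀ k j, psi j (psiStar (j + n) (psi k (psiStar (k + m)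
      (Finsupp.single φ 1)))) ≠ 0 → j ∈ S := by
    intro k j hk
    have := inner_bound hN hn hm hk
    simp only [hS, Finset.mem_Icc]
    omega
  rw [comm_reduce hm hn φ S hS1 hS1' hS2 hS2', LinearMap.zero_apply]
  apply Finset.sum_eq_zero
  intro j hj
  by_cases hT : psi j (psiStar (j + m + n) (Finsupp.single φ 1)) = 0
  · have hT2 : psi j (psiStar (j + n + m) (Finsupp.single φ 1)) = 0 := by
      rw [show j + n + m = j + m + n by ring, hT]
    rw [hT, hT2]
    simp
  · have hb := outer_bound hN hmn (k := j) (by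
      rw [show j + (m + n) = j + m + n by ring]; exact hT)
    have hjm : j + m ∈ S := by
      simp only [hS, Finset.mem_Icc]
      omega
    have hjn : j + n ∈ S := by
      simp only [hS, Finset.mem_Icc]
      omega
    rw [if_pos hjm, if_pos hjn, show j + n + m = j + m + n by ring, sub_self]

open Classical in
theorem key_eq (m : ℤ) (hm : 0 < m) :
    alpha m ∘ₗ alpha (-m) - alpha (-m) ∘ₗ alpha m = (m : ℂ) • LinearMap.id := by
  have hm' : m ≠ 0 := by omega
  have hn' : (-m) ≠ 0 := by omega
  apply fock_ext
  intro φ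
  obtain ⟨mc, N, hN⟩ := φ.ex_charge
  have hdc : mc - N ≤ φ.seq 0 := by
    have h1 := hN N le_rfl
    have h2 := φ.seq_le_seq0 N
    omega
  set A : ℤ := mc - N - 2 * m - 1 with hA
  set B : ℤ := φ.seq 0 + 2 * m + 1 with hB
  set S : Finset ℤ := Finset.Icc A B with hS
  have hS1 : ∀ k, psi k (psiStar (k + (-m)) (Finsupp.single φ 1)) ≠ 0 → k ∈ S := by
    intro k hk
    have := outer_bound hN hn' hk
    simp only [hS, Finset.mem_Icc, hA, hB]
    omega
  have hS1' : ∀ k, psi k (psiStar (k + m) (Finsupp.single φ 1)) ≠ 0 → k ∈ S := by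
    intro k hk
    have := outer_bound hN hm' hk
    simp only [hS, Finset.mem_Icc, hA, hB]
    omega
  have hS2 : ∀ k j, psi j (psiStar (j + m) (psi k (psiStar (k + (-m))
      (Finsupp.single φ 1)))) ≠ 0 → j ∈ S := by
    intro k j hk
    have := inner_bound hN hm' hn' hk
    simp only [hS, Finset.mem_Icc, hA, hB]
    omega
  have hS2' : ∀ k j, psi j (psiStar (j + (-m)) (psi k (psiStar (k + m)
      (Finsupp.single φ 1)))) ≠ 0 → j ∈ S := by
    intro k j hk
    have := inner_bound hN hn' hm' hk
    simp only [hS, Finset.mem_Icc, hA, hB]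
    omega
  rw [comm_reduce hm' hn' φ S hS1 hS1' hS2 hS2']
  have e3 : ∀ j ∈ S, ((if j + m ∈ S then psi j (psiStar (j + m + (-m))
        (Finsupp.single φ 1)) else 0)
      - (if j + (-m) ∈ S then psi j (psiStar (j + (-m) + m) (Finsupp.single φ 1)) else 0))
      = (if (j + m ∈ S ∧ ∃ s, φ.seq s = j) then Finsupp.single φ 1 else 0)
        - (if (j + (-m) ∈ S ∧ ∃ s, φ.seq s = j) then Finsupp.single φ 1 else 0) := by
    intro j _
    rw [show j + m + (-m) = j by ring, show j + (-m) + m = j by ring]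
    simp only [TT_diag]
    rw [← ite_and, ← ite_and]
  rw [Finset.sum_congr rfl e3, Finset.sum_sub_distrib, ← Finset.sum_filter,
    ← Finset.sum_filter, Finset.sum_const, Finset.sum_const]
  -- identify the two filtered sets
  have hc1 : S.filter (fun j => j + m ∈ S ∧ ∃ s, φ.seq s = j)
      = (Finset.Icc A (B - m)).filter (fun j => ∃ s, φ.seq s = j) := by
    ext j
    simp only [Finset.mem_filter, Finset.mem_Icc, hS]
    constructor
    · rintro ⟨⟨h1, h2⟩, ⟨h3, h4⟩, h5⟩
      exact ⟨⟨h1, by omega⟩, h5⟩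
    · rintro ⟨⟨h1, h2⟩, h5⟩
      exact ⟨⟨h1, by omega⟩, ⟨by omega, by omega⟩, h5⟩
  have hc2 : S.filter (fun j => j + (-m) ∈ S ∧ ∃ s, φ.seq s = j)
      = (Finset.Icc (A + m) B).filter (fun j => ∃ s, φ.seq s = j) := by
    ext j
    simp only [Finset.mem_filter, Finset.mem_Icc, hS]
    constructor
    · rintro ⟨⟨h1, h2⟩, ⟨h3, h4⟩, h5⟩
      exact ⟨⟨by omega, h2⟩, h5⟩
    · rintro ⟨⟨h1, h2⟩, h5⟩
      exact ⟨⟨by omega, h2⟩, ⟨by omega, by omega⟩, h5⟩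
  -- split intervals
  have hIcc1 : Finset.Icc A (B - m) = Finset.Icc A (A + m - 1) ∪ Finset.Icc (A + m) (B - m) := by
    ext j
    simp only [Finset.mem_union, Finset.mem_Icc]
    omega
  have hIcc2 : Finset.Icc (A + m) B = Finset.Icc (A + m) (B - m) ∪ Finset.Icc (B - m + 1) B := by
    ext j
    simp only [Finset.mem_union, Finset.mem_Icc]
    omega
  have hdisj1 : Disjoint (Finset.Icc A (A + m - 1)) (Finset.Icc (A + m) (B - m)) := by
    rw [Finset.disjoint_left]
    intro j h1 h2
    simp only [Finset.mem_Icc] at h1 h2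
    omega
  have hdisj2 : Disjoint (Finset.Icc (A + m) (B - m)) (Finset.Icc (B - m + 1) B) := by
    rw [Finset.disjoint_left]
    intro j h1 h2
    simp only [Finset.mem_Icc] at h1 h2
    omega
  have hfull : (Finset.Icc A (A + m - 1)).filter (fun j => ∃ s, φ.seq s = j)
      = Finset.Icc A (A + m - 1) := by
    apply Finset.filter_true_of_mem
    intro j hj
    simp only [Finset.mem_Icc] at hj
    exact SIM.mem_of_le hN (by omega)
  have hempty : (Finset.Icc (B - m + 1) B).filter (fun j => ∃ s, φ.seq s = j)
      = ∅ := by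
    apply Finset.filter_false_of_mem
    intro j hj hmem
    simp only [Finset.mem_Icc] at hj
    obtain ⟨s, hs⟩ := hmem
    have := φ.seq_le_seq0 s
    omega
  have hcard1 : ((Finset.Icc A (B - m)).filter (fun j => ∃ s, φ.seq s = j)).card
      = m.toNat + ((Finset.Icc (A + m) (B - m)).filter (fun j => ∃ s, φ.seq s = j)).card := by
    rw [hIcc1, Finset.filter_union, Finset.card_union_of_disjoint
      (Finset.disjoint_filter_filter hdisj1), hfull, Int.card_Icc]
    congr 1
    omega
  have hcard2 : ((Finset.Icc (A + m) B).filter (fun j => ∃ s, φ.seq s = j)).card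
      = ((Finset.Icc (A + m) (B - m)).filter (fun j => ∃ s, φ.seq s = j)).card := by
    rw [hIcc2, Finset.filter_union, Finset.card_union_of_disjoint
      (Finset.disjoint_filter_filter hdisj2), hempty, Finset.card_empty, add_zero]
  rw [hc1, hc2, hcard1, hcard2, LinearMap.smul_apply, LinearMap.id_apply,
    ← Nat.cast_smul_eq_nsmul ℂ, ← Nat.cast_smul_eq_nsmul ℂ, ← sub_smul]
  congr 1
  rw [Nat.cast_add]
  rw [show ((m.toNat : ℂ)) = (m : ℂ) from by
    exact_mod_cast congrArg (Int.cast : ℤ → ℂ) (Int.toNat_of_nonneg (le_of_lt hm))]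
  ring

/-- the free bosons satisfy the oscillator (Heisenberg) commutation relations
`[α_m, α_n] = m δ_{m,−n} id_F` on `F`; in particular `s_n ↦ α_n`, `K ↦ id` defines a
representation of the oscillator algebra on `F`. -/
theorem alpha_heisenberg (m n : ℤ) :
    alpha m ∘ₗ alpha n - alpha n ∘ₗ alpha m
      = if m = -n then (m : ℂ) • (LinearMap.id : FockF →ₗ[ℂ] FockF) else 0 := by
  by_cases hm0 : m = 0
  · subst hm0
    rw [alpha_zero_comm n]
    split_ifs with h
    · rw [show ((0 : ℤ) : ℂ) = 0 by norm_num, zero_smul]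
    · rfl
  by_cases hn0 : n = 0
  · subst hn0
    have h := alpha_zero_comm m
    have h2 : alpha m ∘ₗ alpha 0 - alpha 0 ∘ₗ alpha m = 0 := by
      apply fock_ext
      intro φ
      have h3 := DFunLike.congr_fun h (Finsupp.single φ 1)
      simp only [LinearMap.sub_apply, LinearMap.comp_apply, LinearMap.zero_apply] at h3 ⊢
      rw [sub_eq_zero] at h3 ⊢
      exact h3.symm
    rw [h2, if_neg (by omega)]
  by_cases hmn : m + n = 0
  · rw [if_pos (by omega)]
    rcases lt_trichotomy m 0 with h | h | h
    · have hn : 0 < n := by omega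
      have hk := key_eq n hn
      have hmn' : m = -n := by omega
      rw [hmn']
      have hswap : alpha (-n) ∘ₗ alpha n - alpha n ∘ₗ alpha (-n)
          = -(alpha n ∘ₗ alpha (-n) - alpha (-n) ∘ₗ alpha n) := by abel
      rw [hswap, hk]
      apply fock_ext
      intro φ
      simp only [LinearMap.neg_apply, LinearMap.smul_apply, LinearMap.id_apply]
      rw [← neg_smul]
      congr 1
      push_cast
      ring
    · omega
    · have hmn' : n = -m := by omega
      rw [hmn']
      exact key_eq m h
  · rw [key_ne hm0 hn0 hmn, if_neg (by omega)]
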